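/- On the projective line over Z_4 × Z_4, the neighbourhoods of the three pairwise distant points U = (1,0), V = (0,1), W = (1,1) have empty common intersection. -/

import Mathlib

def Admissible {R : Type*} [CommRing R] (p : R × R) : Prop :=
  ∃ M : Matrix (Fin 2) (Fin 2) R, IsUnit M ∧ M 0 0 = p.1 ∧ M 0 1 = p.2

def PairRel {R : Type*} [CommRing R] (p q : {p : R × R // Admissible p}) : Prop :=
  ∃ u : Rˣ, q.1 = ((u : R) * p.1.1, (u : R) * p.1.2)

/-- The projective line over `R`: unit-orbit classes of admissible pairs. -/
def PL (R : Type*) [CommRing R] : Type _ := Quot (@PairRel R _)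

def PL.mk {R : Type*} [CommRing R] (p : R × R) (h : Admissible p) : PL R :=
  Quot.mk _ ⟨p, h⟩

/-- `x` is a zero-divisor (counting `0` as a zero-divisor). -/
def IsZD {R : Type*} [CommRing R] (x : R) : Prop :=
  x = 0 ∨ ∃ y : R, y ≠ 0 ∧ x * y = 0

/-- A point is of type I if some representative has a unit entry. -/
def TypeI {R : Type*} [CommRing R] (X : PL R) : Prop :=
  ∃ p h, PL.mk p h = X ∧ (IsUnit p.1 ∨ IsUnit p.2)

/-- A point is of type II if every representative has both coordinates zero-divisors. -/
def TypeII {R : Type*} [CommRing R] (X : PL R) : Prop :=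
  ∀ p h, PL.mk p h = X → IsZD p.1 ∧ IsZD p.2

/-- Neighbour relation: the determinant of representatives is a non-unit. -/
def Nbr {R : Type*} [CommRing R] (X Y : PL R) : Prop :=
  ∃ p q hp hq, X = PL.mk p hp ∧ Y = PL.mk q hq ∧ ¬ IsUnit (p.1 * q.2 - p.2 * q.1)

/-- Neighbour relation phrased via zero-divisors. -/
def NbrZD {R : Type*} [CommRing R] (X Y : PL R) : Prop :=
  ∃ p q hp hq, X = PL.mk p hp ∧ Y = PL.mk q hq ∧ IsZD (p.1 * q.2 - p.2 * q.1)

/-- Distant relation: the determinant of representatives is a unit. -/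
def Distant {R : Type*} [CommRing R] (X Y : PL R) : Prop :=
  ∃ p q hp hq, X = PL.mk p hp ∧ Y = PL.mk q hq ∧ IsUnit (p.1 * q.2 - p.2 * q.1)

lemma adm {R : Type*} [CommRing R] (a b c d : R) (h : IsUnit (a * d - b * c)) :
    Admissible (a, b) :=
  ⟨!![a, b; c, d], (Matrix.isUnit_iff_isUnit_det _).2
    (by simpa [Matrix.det_fin_two_of] using h), rfl, rfl⟩

def ptU (R : Type*) [CommRing R] : PL R :=
  PL.mk (1, 0) (adm 1 0 0 1 (by simpa using isUnit_one))

def ptV (R : Type*) [CommRing R] : PL R :=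
  PL.mk (0, 1) (adm 0 1 1 0 (by simpa using (isUnit_one (M := R)).neg))

def ptW (R : Type*) [CommRing R] : PL R :=
  PL.mk (1, 1) (adm 1 1 0 1 (by simpa using isUnit_one))

abbrev R4 : Type := ZMod 4 × ZMod 4

lemma equiv_pairRel (R : Type*) [CommRing R] : Equivalence (@PairRel R _) := by
  constructor
  · intro p; exact ⟨1, by simp⟩
  · rintro p q ⟨u, hu⟩
    refine ⟨u⁻¹, ?_⟩
    rw [hu]
    ext <;> simp [← mul_assoc]
  · rintro p q r ⟨u, hu⟩ ⟨v, hv⟩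
    refine ⟨v * u, ?_⟩
    rw [hv, hu]
    ext <;> simp [mul_assoc]

lemma mk_eq {R : Type*} [CommRing R] {p q : R × R} {hp : Admissible p} {hq : Admissible q}
    (h : PL.mk p hp = PL.mk q hq) : ∃ u : Rˣ, q = ((u : R) * p.1, (u : R) * p.2) := by
  have h1 : Relation.EqvGen PairRel (⟨p, hp⟩ : {p : R × R // Admissible p}) ⟨q, hq⟩ :=
    Quot.eqvGen_exact h
  have h2 := (Equivalence.eqvGen_iff (equiv_pairRel R)).mp h1
  obtain ⟨u, hu⟩ := h2
  exact ⟨u, hu⟩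

lemma z4_two_ne {v : ZMod 4} (hv : IsUnit v) : 2 * v ≠ 0 := by
  obtain ⟨w, hw⟩ := isUnit_iff_exists_inv.mp hv
  intro h
  have h2 : (2 : ZMod 4) = 2 * v * w := by rw [mul_assoc, hw, mul_one]
  rw [h, zero_mul] at h2
  exact (by decide : (2 : ZMod 4) ≠ 0) h2

lemma z4_keyA {y v : ZMod 4} (hv : IsUnit v) (h : 2 * (y * v) = 0) : 2 * y = 0 := by
  obtain ⟨w, hw⟩ := isUnit_iff_exists_inv.mp hv
  have h2 : 2 * y = 2 * (y * v) * w := by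
    rw [show 2 * (y * v) * w = 2 * y * (v * w) by ring, hw, mul_one]
  rw [h2, h, zero_mul]

lemma z4_mul_eq_zero {x y : ZMod 4} (hy : y ≠ 0) (h : x * y = 0) : 2 * x = 0 := by
  revert hy h; revert x y; decide

lemma r4_zd {e : R4} (h : IsZD e) : 2 * e.1 = 0 ∨ 2 * e.2 = 0 := by
  rcases h with h | ⟨y, hy, hxy⟩
  · left; rw [h]; rfl
  · have h1 : e.1 * y.1 = 0 := by have := congrArg Prod.fst hxy; simpa using this
    have h2 : e.2 * y.2 = 0 := by have := congrArg Prod.snd hxy; simpa using this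
    by_cases hy1 : y.1 = 0
    · right
      refine z4_mul_eq_zero (y := y.2) (fun hy2 => hy (Prod.ext hy1 hy2)) h2
    · left; exact z4_mul_eq_zero hy1 h1

lemma r4_unit {x : R4} (h : IsUnit x) : IsUnit x.1 ∧ IsUnit x.2 := by
  obtain ⟨y, hy⟩ := isUnit_iff_exists_inv.mp h
  constructor
  · exact IsUnit.of_mul_eq_one y.1 (by have := congrArg Prod.fst hy; simpa using this)
  · exact IsUnit.of_mul_eq_one y.2 (by have := congrArg Prod.snd hy; simpa using this)

lemma z4_final (a1 a2 b1 b2 : ZMod 4)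
    (h1 : ¬(2 * a1 = 0 ∧ 2 * b1 = 0)) (h2 : ¬(2 * a2 = 0 ∧ 2 * b2 = 0))
    (ha : 2 * a1 = 0 ∨ 2 * a2 = 0) (hb : 2 * b1 = 0 ∨ 2 * b2 = 0)
    (hab : 2 * (a1 - b1) = 0 ∨ 2 * (a2 - b2) = 0) : False := by
  revert h1 h2 ha hb hab; revert a1 a2 b1 b2; decide

theorem stmt10 (X : PL R4) :
    ¬ (NbrZD X (ptU R4) ∧ X ≠ ptU R4 ∧ NbrZD X (ptV R4) ∧ X ≠ ptV R4 ∧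
       NbrZD X (ptW R4) ∧ X ≠ ptW R4) := by
  rintro ⟨⟨p, q, hp, hq, hXp, hUq, hdU⟩, -, ⟨p', q', hp', hq', hXp', hVq', hdV⟩, -,
         ⟨p'', q'', hp'', hq'', hXp'', hWq'', hdW⟩, -⟩
  -- representatives of U, V, W
  unfold ptU at hUq
  unfold ptV at hVq'
  unfold ptW at hWq''
  obtain ⟨u, hu⟩ := mk_eq hUq
  obtain ⟨u', hu'⟩ := mk_eq hVq'
  obtain ⟨u'', hu''⟩ := mk_eq hWq''
  subst hu hu' hu''
  -- representatives p', p'' of X in terms of p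
  obtain ⟨v, hv⟩ := mk_eq (hXp.symm.trans hXp')
  obtain ⟨w, hw⟩ := mk_eq (hXp.symm.trans hXp'')
  subst hv hw
  -- unit components
  obtain ⟨hu1, hu2⟩ := r4_unit u.isUnit
  obtain ⟨hu'1, hu'2⟩ := r4_unit u'.isUnit
  obtain ⟨hu''1, hu''2⟩ := r4_unit u''.isUnit
  obtain ⟨hv1, hv2⟩ := r4_unit v.isUnit
  obtain ⟨hw1, hw2⟩ := r4_unit w.isUnit
  set a : R4 := p.1 with hadef
  set b : R4 := p.2 with hbdef
  -- from U : b has a zero-divisor coordinate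
  have hb : 2 * b.1 = 0 ∨ 2 * b.2 = 0 := by
    rcases r4_zd hdU with h | h
    · left
      simp only [Prod.fst_mul, Prod.fst_sub, Prod.snd_mul, Prod.fst_one, Prod.snd_one, Prod.fst_zero, Prod.snd_zero, mul_one, mul_zero] at h
      exact z4_keyA hu1 (by linear_combination -h)
    · right
      simp only [Prod.snd_mul, Prod.snd_sub, Prod.fst_mul, Prod.fst_one, Prod.snd_one, Prod.fst_zero, Prod.snd_zero, mul_one, mul_zero] at h
      exact z4_keyA hu2 (by linear_combination -h)
  -- from V : a has a zero-divisor coordinate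
  have ha : 2 * a.1 = 0 ∨ 2 * a.2 = 0 := by
    rcases r4_zd hdV with h | h
    · left
      simp only [Prod.fst_mul, Prod.fst_sub, Prod.snd_mul, Prod.fst_one, Prod.snd_one, Prod.fst_zero, Prod.snd_zero, mul_one, mul_zero] at h
      exact z4_keyA (hv1.mul hu'1) (by linear_combination h)
    · right
      simp only [Prod.snd_mul, Prod.snd_sub, Prod.fst_mul, Prod.fst_one, Prod.snd_one, Prod.fst_zero, Prod.snd_zero, mul_one, mul_zero] at h
      exact z4_keyA (hv2.mul hu'2) (by linear_combination h)
  -- from W : a - b has a zero-divisor coordinate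
  have hab : 2 * (a.1 - b.1) = 0 ∨ 2 * (a.2 - b.2) = 0 := by
    rcases r4_zd hdW with h | h
    · left
      simp only [Prod.fst_mul, Prod.fst_sub, Prod.snd_mul, Prod.fst_one, Prod.snd_one, Prod.fst_zero, Prod.snd_zero, mul_one, mul_zero] at h
      exact z4_keyA (hw1.mul hu''1) (by linear_combination h)
    · right
      simp only [Prod.snd_mul, Prod.snd_sub, Prod.fst_mul, Prod.fst_one, Prod.snd_one, Prod.fst_zero, Prod.snd_zero, mul_one, mul_zero] at h
      exact z4_keyA (hw2.mul hu''2) (by linear_combination h)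
  -- admissibility of p gives unimodularity in each coordinate
  obtain ⟨M, hM, hM00, hM01⟩ := hp
  have hdet := (Matrix.isUnit_iff_isUnit_det M).mp hM
  rw [Matrix.det_fin_two, hM00, hM01] at hdet
  obtain ⟨hdet1, hdet2⟩ := r4_unit hdet
  simp only [Prod.fst_mul, Prod.fst_sub, Prod.snd_mul, Prod.snd_sub] at hdet1 hdet2
  have h1 : ¬(2 * a.1 = 0 ∧ 2 * b.1 = 0) := by
    rintro ⟨h1a, h1b⟩
    exact z4_two_ne hdet1 (by linear_combination (M 1 1).1 * h1a - (M 1 0).1 * h1b)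
  have h2 : ¬(2 * a.2 = 0 ∧ 2 * b.2 = 0) := by
    rintro ⟨h2a, h2b⟩
    exact z4_two_ne hdet2 (by linear_combination (M 1 1).2 * h2a - (M 1 0).2 * h2b)
  exact z4_final a.1 a.2 b.1 b.2 h1 h2 ha hb hab
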